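/- arXiv:2112.14315 — 4 statements merged into one kernel-verified Lean document; each statement's English description precedes it below -/
import Mathlib

section
/- Let p be a continuous cumulative distribution function on [0,1], strictly increasing on some interval [x₁,x₂] ⊆ [0,1] with δ := p(x₂) − p(x₁) > 0. Then for any cumulative distribution function q of a discrete probability measure supported on at most J points, sup_{x∈[0,1]} |p(x) − q(x)| ≥ δ/(2(J+1)). -/
/-- A continuous CDF `p` strictly increasing on `[x₁,x₂] ⊆ [0,1]` with
`δ := p x₂ − p x₁ > 0` cannot be approximated in supremum norm better than
`δ / (2(J+1))` by the CDF `q` of a discrete probability measure supported on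
at most `J` points (equivalently, a step function whose jumps lie in a set `S`
of at most `J` points). -/
theorem stmt_4 (p q : ℝ → ℝ) (x₁ x₂ : ℝ) (J : ℕ) (S : Finset ℝ)
    (hpmono : Monotone p) (hpcont : Continuous p)
    (hp0 : ∀ x < (0:ℝ), p x = 0) (hp1 : ∀ x ≥ (1:ℝ), p x = 1)
    (hsub : Set.Icc x₁ x₂ ⊆ Set.Icc (0:ℝ) 1)
    (hstrict : StrictMonoOn p (Set.Icc x₁ x₂))
    (hδ : 0 < p x₂ - p x₁)
    (hqmono : Monotone q)
    (hq0 : ∀ x < (0:ℝ), q x = 0) (hq1 : ∀ x ≥ (1:ℝ), q x = 1)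
    (hcard : S.card ≤ J)
    (hstep : ∀ a b : ℝ, a ≤ b → (∀ z ∈ S, z ∉ Set.Ioc a b) → q a = q b) :
    (p x₂ - p x₁) / (2 * (J + 1)) ≤ ⨆ x : Set.Icc (0:ℝ) 1, |p x - q x| := by
  set δ := p x₂ - p x₁ with hδdef
  have hx12 : x₁ ≤ x₂ := by
    by_contra h
    push_neg at h
    have := hpmono h.le
    simp only [hδdef] at hδ
    linarith
  have hJR : (0:ℝ) < (J:ℝ) + 1 := by positivity
  set d : ℝ := δ / ((J:ℝ) + 1) with hddef
  have hd : 0 < d := by positivity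
  -- IVT : choose points y i in [x₁,x₂] with p (y i) = p x₁ + min i (J+1) * d
  have hIVT := intermediate_value_Icc hx12 hpcont.continuousOn
  have hy : ∀ i : ℕ, ∃ y ∈ Set.Icc x₁ x₂, p y = p x₁ + (min i (J+1) : ℕ) * d := by
    intro i
    apply hIVT
    constructor
    · have : (0:ℝ) ≤ (min i (J+1) : ℕ) := by positivity
      nlinarith
    · have hle : ((min i (J+1) : ℕ) : ℝ) ≤ (J:ℝ) + 1 := by
        have := min_le_right i (J+1)
        exact_mod_cast this
      have : ((min i (J+1) : ℕ) : ℝ) * d ≤ ((J:ℝ)+1) * d := by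
        apply mul_le_mul_of_nonneg_right hle hd.le
      have hdd : ((J:ℝ)+1) * d = δ := by
        rw [hddef, mul_div_assoc']; exact mul_div_cancel_left₀ δ hJR.ne'
      simp only [hδdef] at hdd ⊢
      linarith
  choose y hymem hpy using hy
  -- y is strictly increasing up to J+1
  have hylt : ∀ a b : ℕ, a < b → b ≤ J+1 → y a < y b := by
    intro a b hab hb
    have hva : min a (J+1) = a := min_eq_left (by omega)
    have hvb : min b (J+1) = b := min_eq_left hb
    have hpv : p (y a) < p (y b) := by
      rw [hpy, hpy, hva, hvb]
      have : (a:ℝ) < (b:ℝ) := by exact_mod_cast hab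
      nlinarith
    by_contra h
    push_neg at h
    exact absurd (hpmono h) (not_le.mpr hpv)
  -- pigeonhole: some interval (y i, y (i+1)] misses S
  have hpig : ∃ i < J+1, ∀ z ∈ S, z ∉ Set.Ioc (y i) (y (i+1)) := by
    by_contra h
    push_neg at h
    choose z hz1 hz2 using h
    set f : ℕ → ℝ := fun i => if hi : i < J+1 then z i hi else 0 with hf
    have hmaps : ∀ i ∈ Finset.range (J+1), f i ∈ S := by
      intro i hi
      simp only [Finset.mem_range] at hi
      simp only [hf, dif_pos hi]
      exact hz1 i hi
    have hinj : Set.InjOn f (Finset.range (J+1)) := by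
      intro a ha b hb hfeq
      simp only [Finset.coe_range, Set.mem_Iio] at ha hb
      by_contra hne
      rcases lt_or_gt_of_ne hne with hlt | hlt
      · have h1 : z a ha ≤ y (a+1) := (hz2 a ha).2
        have h2 : y (b) < z b hb := (hz2 b hb).1
        have h3 : y (a+1) ≤ y b := by
          rcases eq_or_lt_of_le (Nat.succ_le_of_lt hlt) with he | hl
          · exact le_of_eq (congrArg y he)
          · exact (hylt _ _ hl (by omega)).le
        simp only [hf, dif_pos ha, dif_pos hb] at hfeq
        rw [hfeq] at h1
        linarith
      · have h1 : z b hb ≤ y (b+1) := (hz2 b hb).2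
        have h2 : y (a) < z a ha := (hz2 a ha).1
        have h3 : y (b+1) ≤ y a := by
          rcases eq_or_lt_of_le (Nat.succ_le_of_lt hlt) with he | hl
          · exact le_of_eq (congrArg y he)
          · exact (hylt _ _ hl (by omega)).le
        simp only [hf, dif_pos ha, dif_pos hb] at hfeq
        rw [← hfeq] at h1
        linarith
    have := Finset.card_le_card_of_injOn f hmaps hinj
    simp only [Finset.card_range] at this
    omega
  obtain ⟨i, hi, hnone⟩ := hpig
  set a := y i with ha
  set b := y (i+1) with hb
  have hab : a < b := hylt i (i+1) (by omega) (by omega)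
  have hqab : q a = q b := hstep a b hab.le hnone
  have hpab : p b - p a = d := by
    rw [hpy, hpy, min_eq_left (by omega : i ≤ J+1), min_eq_left (by omega : i+1 ≤ J+1)]
    push_cast
    ring
  -- bound the sup from below
  have hbdd : BddAbove (Set.range fun x : Set.Icc (0:ℝ) 1 => |p x.1 - q x.1|) := by
    refine ⟨2, ?_⟩
    rintro _ ⟨x, rfl⟩
    obtain ⟨hx0, hx1⟩ := x.2
    have hp_lb : 0 ≤ p x.1 := by
      have := hpmono (show (-1:ℝ) ≤ x.1 by linarith)
      rw [hp0 (-1) (by norm_num)] at this; exact this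
    have hp_ub : p x.1 ≤ 1 := by
      have := hpmono hx1
      rw [hp1 1 le_rfl] at this; exact this
    have hq_lb : 0 ≤ q x.1 := by
      have := hqmono (show (-1:ℝ) ≤ x.1 by linarith)
      rw [hq0 (-1) (by norm_num)] at this; exact this
    have hq_ub : q x.1 ≤ 1 := by
      have := hqmono hx1
      rw [hq1 1 le_rfl] at this; exact this
    rw [abs_le]; constructor <;> linarith
  have hamem : a ∈ Set.Icc (0:ℝ) 1 := hsub (hymem i)
  have hbmem : b ∈ Set.Icc (0:ℝ) 1 := hsub (hymem (i+1))
  have hsa : |p a - q a| ≤ ⨆ x : Set.Icc (0:ℝ) 1, |p x - q x| :=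
    le_ciSup hbdd (⟨a, hamem⟩ : Set.Icc (0:ℝ) 1)
  have hsb : |p b - q b| ≤ ⨆ x : Set.Icc (0:ℝ) 1, |p x - q x| :=
    le_ciSup hbdd (⟨b, hbmem⟩ : Set.Icc (0:ℝ) 1)
  have key : d / 2 ≤ |p a - q a| ∨ d / 2 ≤ |p b - q b| := by
    by_contra h
    push_neg at h
    have h1 := le_abs_self (p b - q b)
    have h2 := neg_abs_le (p a - q a)
    have : p b - p a = (p b - q b) - (p a - q a) := by rw [hqab]; ring
    rw [hpab] at this
    linarith [h.1, h.2]
  have hgoal : δ / (2 * ((J:ℝ) + 1)) = d / 2 := by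
    rw [hddef, div_div, mul_comm]
  simp only [hδdef] at hgoal ⊢
  rw [hgoal]
  rcases key with hk | hk
  · linarith
  · linarith
end

section
/- Let Q be the transition matrix of an irreducible finite-state Markov chain with J states, and let M be the matrix obtained from I − Qᵀ by replacing its first row with the all-ones row vector. Then M is nonsingular. -/
open Matrix

private lemma pow_entry_nonneg {J : ℕ} (Q : Matrix (Fin J) (Fin J) ℝ)
    (h : ∀ i j, 0 ≤ Q i j) : ∀ n i j, 0 ≤ (Q ^ n) i j := by
  intro n
  induction n with
  | zero =>
    intro i j
    rw [pow_zero]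
    by_cases hij : i = j <;> simp [Matrix.one_apply, hij]
  | succ n ih =>
    intro i j
    rw [pow_succ, Matrix.mul_apply]
    exact Finset.sum_nonneg fun m _ => mul_nonneg (ih i m) (h m j)

private lemma fix_pow {J : ℕ} (Q : Matrix (Fin J) (Fin J) ℝ) (w : Fin J → ℝ)
    (hfix : ∀ i, ∑ j, Q j i * w j = w i) :
    ∀ n i, ∑ j, (Q ^ n) j i * w j = w i := by
  intro n
  induction n with
  | zero =>
    intro i
    simp [Matrix.one_apply]
  | succ n ih =>
    intro i
    have : ∑ j, (Q ^ (n+1)) j i * w j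
        = ∑ m, Q m i * (∑ j, (Q ^ n) j m * w j) := by
      simp_rw [pow_succ, Matrix.mul_apply, Finset.sum_mul, Finset.mul_sum]
      rw [Finset.sum_comm]
      congr 1; ext j; congr 1; ext m; ring
    rw [this]
    simp_rw [ih]
    exact hfix i

private lemma pos_prop {J : ℕ} (Q : Matrix (Fin J) (Fin J) ℝ)
    (hnonneg : ∀ i j, 0 ≤ Q i j)
    (hirr : ∀ i j, ∃ n : ℕ, 0 < n ∧ 0 < (Q ^ n) i j)
    (w : Fin J → ℝ) (hw : ∀ i, 0 ≤ w i)
    (hfix : ∀ i, ∑ j, Q j i * w j = w i)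
    (k : Fin J) (hk : 0 < w k) : ∀ i, 0 < w i := by
  intro i
  obtain ⟨n, -, hn⟩ := hirr k i
  have h1 : ∑ j, (Q ^ n) j i * w j = w i := fix_pow Q w hfix n i
  have h2 : (Q ^ n) k i * w k ≤ ∑ j, (Q ^ n) j i * w j :=
    Finset.single_le_sum (f := fun j => (Q ^ n) j i * w j)
      (fun j _ => mul_nonneg (pow_entry_nonneg Q hnonneg n j i) (hw j))
      (Finset.mem_univ k)
  have := mul_pos hn hk
  linarith

/-- For an irreducible row-stochastic `J×J` matrix `Q`, the matrix obtained from
`I − Qᵀ` by replacing its first row with the all-ones row is nonsingular. -/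
theorem stmt_5 (J : ℕ) [NeZero J] (Q : Matrix (Fin J) (Fin J) ℝ)
    (hnonneg : ∀ i j, 0 ≤ Q i j)
    (hrowsum : ∀ i, ∑ j, Q i j = 1)
    (hirr : ∀ i j, ∃ n : ℕ, 0 < n ∧ 0 < (Q ^ n) i j) :
    IsUnit (Matrix.updateRow (1 - Qᵀ) 0 (fun _ => (1:ℝ))).det := by
  rw [isUnit_iff_ne_zero]
  intro hdet
  obtain ⟨v, hv0, hvM⟩ := (Matrix.exists_mulVec_eq_zero_iff).2 hdet
  -- row 0 : sum of v is 0
  have hsum : ∑ j, v j = 0 := by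
    have := congrFun hvM 0
    simpa [Matrix.mulVec, dotProduct] using this
  -- rows i ≠ 0 : v i = ∑ j, Q j i * v j
  have hrow : ∀ i : Fin J, i ≠ 0 → ∑ j, Q j i * v j = v i := by
    intro i hi
    have := congrFun hvM i
    simp only [Matrix.mulVec, dotProduct, Matrix.updateRow_ne hi,
      Matrix.sub_apply, Matrix.one_apply, Matrix.transpose_apply, Pi.zero_apply,
      sub_mul] at this
    rw [Finset.sum_sub_distrib] at this
    have h1 : ∑ j, (if i = j then (1:ℝ) else 0) * v j = v i := by
      simp [Finset.sum_ite_eq]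
    rw [h1] at this
    linarith
  -- the fixed point equation holds at 0 too
  have hfix : ∀ i, ∑ j, Q j i * v j = v i := by
    intro i
    by_cases hi : i = 0
    · subst hi
      -- total sum of (Qᵀ v) over all i equals ∑ v = 0
      have htot : ∑ i, ∑ j, Q j i * v j = 0 := by
        rw [Finset.sum_comm]
        have : ∀ j, ∑ i, Q j i * v j = v j := by
          intro j
          rw [← Finset.sum_mul, hrowsum j, one_mul]
        simp_rw [this]
        exact hsum
      have hsplit : ∑ i, ∑ j, Q j i * v j
          = (∑ j, Q j 0 * v j) + ∑ i ∈ Finset.univ.erase 0, ∑ j, Q j i * v j := by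
        exact (Finset.add_sum_erase Finset.univ (fun i => ∑ j, Q j i * v j)
          (Finset.mem_univ 0)).symm
      have hrest : ∑ i ∈ Finset.univ.erase 0, ∑ j, Q j i * v j
          = ∑ i ∈ Finset.univ.erase 0, v i := by
        apply Finset.sum_congr rfl
        intro i hi
        exact hrow i (Finset.ne_of_mem_erase hi)
      have hrest2 : ∑ i ∈ Finset.univ.erase 0, v i = - v 0 := by
        have := Finset.add_sum_erase Finset.univ v (Finset.mem_univ (0 : Fin J))
        rw [hsum] at this
        linarith
      rw [hsplit, hrest, hrest2] at htot
      linarith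
    · exact hrow i hi
  -- |v| is also a fixed point
  have habs : ∀ i, ∑ j, Q j i * |v j| = |v i| := by
    have hle : ∀ i, |v i| ≤ ∑ j, Q j i * |v j| := by
      intro i
      rw [← hfix i]
      calc |∑ j, Q j i * v j| ≤ ∑ j, |Q j i * v j| := Finset.abs_sum_le_sum_abs _ _
        _ = ∑ j, Q j i * |v j| := by
          apply Finset.sum_congr rfl
          intro j _
          rw [abs_mul, abs_of_nonneg (hnonneg j i)]
    have hsums : ∑ i, ∑ j, Q j i * |v j| = ∑ i, |v i| := by
      rw [Finset.sum_comm]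
      apply Finset.sum_congr rfl
      intro j _
      rw [← Finset.sum_mul, hrowsum j, one_mul]
    have := (Finset.sum_eq_sum_iff_of_le (fun i _ => hle i)).1 hsums.symm
    intro i
    exact ((this i (Finset.mem_univ i))).symm
  -- positive and negative parts
  set p : Fin J → ℝ := fun i => (|v i| + v i) / 2 with hp
  set q : Fin J → ℝ := fun i => (|v i| - v i) / 2 with hq
  have hpfix : ∀ i, ∑ j, Q j i * p j = p i := by
    intro i
    simp only [hp]
    have e : ∀ x, Q x i * ((|v x| + v x)/2) = (Q x i * |v x| + Q x i * v x)/2 :=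
      fun x => by ring
    simp_rw [e]
    rw [← Finset.sum_div, Finset.sum_add_distrib, habs i, hfix i]
  have hqfix : ∀ i, ∑ j, Q j i * q j = q i := by
    intro i
    simp only [hq]
    have e : ∀ x, Q x i * ((|v x| - v x)/2) = (Q x i * |v x| - Q x i * v x)/2 :=
      fun x => by ring
    simp_rw [e]
    rw [← Finset.sum_div, Finset.sum_sub_distrib, habs i, hfix i]
  have hpnn : ∀ i, 0 ≤ p i := fun i => by
    have := neg_abs_le (v i); simp only [hp]; linarith
  have hqnn : ∀ i, 0 ≤ q i := fun i => by
    have := le_abs_self (v i); simp only [hq]; linarith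
  -- since v ≠ 0 and sum v = 0, there are strictly positive and strictly negative entries
  obtain ⟨k, hk⟩ : ∃ k, v k ≠ 0 := by
    by_contra h
    push_neg at h
    exact hv0 (funext h)
  have hkpos : ∃ k, 0 < v k := by
    by_contra h
    push_neg at h
    rcases lt_or_gt_of_ne hk with hlt | hgt
    · have : ∑ j, v j < 0 := by
        apply Finset.sum_neg' (fun i _ => h i) ⟨k, Finset.mem_univ k, hlt⟩
      linarith [hsum]
    · exact absurd (h k) (not_le.2 hgt)
  have hkneg : ∃ k, v k < 0 := by
    by_contra h
    push_neg at h
    rcases lt_or_gt_of_ne hk with hlt | hgt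
    · exact absurd (h k) (not_le.2 hlt)
    · have : 0 < ∑ j, v j := Finset.sum_pos' (fun i _ => h i) ⟨k, Finset.mem_univ k, hgt⟩
      linarith [hsum]
  obtain ⟨a, ha⟩ := hkpos
  obtain ⟨b, hb⟩ := hkneg
  have hpa : 0 < p a := by
    have := le_abs_self (v a); simp only [hp]; linarith
  have hqb : 0 < q b := by
    have := neg_abs_le (v b); simp only [hq]; linarith
  have hppos := pos_prop Q hnonneg hirr p hpnn hpfix a hpa
  have hqpos := pos_prop Q hnonneg hirr q hqnn hqfix b hqb
  have h1 := hppos a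
  have h2 := hqpos a
  simp only [hp, hq] at h1 h2
  rcases abs_choice (v a) with h | h <;> linarith
end

section
/- Suppose a finite-state Markov chain with transition matrix Q (J states) has two distinct closed communicating classes. Then the matrix M, obtained by replacing the first row of I − Qᵀ with the all-ones row vector, is singular. -/
open Matrix Filter Topology

/-- If a finite-state Markov chain with row-stochastic transition matrix `Q` has two
distinct (disjoint, nonempty) closed communicating classes, then the matrix obtained by
replacing the first row of `I − Qᵀ` with the all-ones row vector is singular. -/
theorem stmt_7 (J : ℕ) [NeZero J] (Q : Matrix (Fin J) (Fin J) ℝ)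
    (hnonneg : ∀ i j, 0 ≤ Q i j)
    (hrowsum : ∀ i, ∑ j, Q i j = 1)
    (C₁ C₂ : Set (Fin J))
    (hne₁ : C₁.Nonempty) (hne₂ : C₂.Nonempty)
    (hdisj : Disjoint C₁ C₂)
    (hclosed₁ : ∀ i ∈ C₁, ∀ j, 0 < Q i j → j ∈ C₁)
    (hclosed₂ : ∀ i ∈ C₂, ∀ j, 0 < Q i j → j ∈ C₂)
    (hcomm₁ : ∀ i ∈ C₁, ∀ j ∈ C₁, ∃ n : ℕ, 0 < n ∧ 0 < (Q ^ n) i j)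
    (hcomm₂ : ∀ i ∈ C₂, ∀ j ∈ C₂, ∃ n : ℕ, 0 < n ∧ 0 < (Q ^ n) i j) :
    (Matrix.updateRow (1 - Qᵀ) 0 (fun _ => (1:ℝ))).det = 0 := by
  classical
  obtain ⟨i₁, hi₁⟩ := hne₁
  obtain ⟨i₂, hi₂⟩ := hne₂
  set g : Fin J → ℝ := fun j => if j ∈ C₁ then (1:ℝ) else 0 with hgdef
  set f : ℕ → Fin J → ℝ := fun n => (Q ^ n) *ᵥ g with hfdef
  have hf0 : ∀ i, f 0 i = g i := by
    intro i
    simp [hfdef]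
  have hfsucc : ∀ n i, f (n+1) i = ∑ j, Q i j * f n j := by
    intro n i
    have hp : (Q ^ (n+1)) *ᵥ g = Q *ᵥ ((Q ^ n) *ᵥ g) := by
      rw [Matrix.mulVec_mulVec, ← pow_succ']
    simp [hfdef, hp, Matrix.mulVec, dotProduct]
  have hzeroC₁ : ∀ i ∈ C₁, ∀ j, j ∉ C₁ → Q i j = 0 := by
    intro i hi j hj
    by_contra hne
    exact hj (hclosed₁ i hi j (lt_of_le_of_ne (hnonneg i j) (Ne.symm hne)))
  have hzeroC₂ : ∀ i ∈ C₂, ∀ j, j ∉ C₂ → Q i j = 0 := by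
    intro i hi j hj
    by_contra hne
    exact hj (hclosed₂ i hi j (lt_of_le_of_ne (hnonneg i j) (Ne.symm hne)))
  have hfC₁ : ∀ n, ∀ i ∈ C₁, f n i = 1 := by
    intro n
    induction n with
    | zero => intro i hi; rw [hf0]; simp [hgdef, hi]
    | succ n ih =>
      intro i hi
      rw [hfsucc]
      have hterm : ∀ j, Q i j * f n j = Q i j := by
        intro j
        by_cases hj : j ∈ C₁
        · rw [ih j hj, mul_one]
        · rw [hzeroC₁ i hi j hj]; ring
      rw [Finset.sum_congr rfl (fun j _ => hterm j), hrowsum i]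
  have hfC₂ : ∀ n, ∀ i ∈ C₂, f n i = 0 := by
    intro n
    induction n with
    | zero =>
      intro i hi
      rw [hf0]
      have : i ∉ C₁ := fun h => (Set.disjoint_left.mp hdisj h) hi
      simp [hgdef, this]
    | succ n ih =>
      intro i hi
      rw [hfsucc]
      apply Finset.sum_eq_zero
      intro j _
      by_cases hj : j ∈ C₂
      · rw [ih j hj, mul_zero]
      · rw [hzeroC₂ i hi j hj]; ring
  have hfnonneg : ∀ n i, 0 ≤ f n i := by
    intro n
    induction n with
    | zero => intro i; rw [hf0]; simp only [hgdef]; split <;> norm_num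
    | succ n ih =>
      intro i
      rw [hfsucc]
      exact Finset.sum_nonneg fun j _ => mul_nonneg (hnonneg i j) (ih j)
  have hfle1 : ∀ n i, f n i ≤ 1 := by
    intro n
    induction n with
    | zero => intro i; rw [hf0]; simp only [hgdef]; split <;> norm_num
    | succ n ih =>
      intro i
      rw [hfsucc]
      calc ∑ j, Q i j * f n j ≤ ∑ j, Q i j * 1 :=
            Finset.sum_le_sum fun j _ => mul_le_mul_of_nonneg_left (ih j) (hnonneg i j)
        _ = 1 := by simpa using hrowsum i
  have hfmono : ∀ n i, f n i ≤ f (n+1) i := by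
    intro n
    induction n with
    | zero =>
      intro i
      by_cases hi : i ∈ C₁
      · rw [hf0, hfC₁ 1 i hi]; simp [hgdef, hi]
      · rw [hf0]; simp only [hgdef]
        simp only [hi, if_false]
        exact hfnonneg 1 i
    | succ n ih =>
      intro i
      rw [hfsucc, hfsucc]
      exact Finset.sum_le_sum fun j _ => mul_le_mul_of_nonneg_left (ih j) (hnonneg i j)
  set h : Fin J → ℝ := fun i => ⨆ n, f n i with hhdef
  have hbdd : ∀ i, BddAbove (Set.range fun n => f n i) := by
    intro i
    refine ⟨1, ?_⟩
    rintro x ⟨n, rfl⟩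
    exact hfle1 n i
  have htend : ∀ i, Tendsto (fun n => f n i) atTop (𝓝 (h i)) := fun i =>
    tendsto_atTop_ciSup (monotone_nat_of_le_succ fun n => hfmono n i) (hbdd i)
  have hhC₁ : ∀ i ∈ C₁, h i = 1 := by
    intro i hi
    have : (fun n => f n i) = fun _ => (1:ℝ) := funext fun n => hfC₁ n i hi
    simp only [hhdef, this, ciSup_const]
  have hhC₂ : ∀ i ∈ C₂, h i = 0 := by
    intro i hi
    have : (fun n => f n i) = fun _ => (0:ℝ) := funext fun n => hfC₂ n i hi
    simp only [hhdef, this, ciSup_const]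
  have hQh : ∀ i, ∑ j, Q i j * h j = h i := by
    intro i
    have h1 : Tendsto (fun n => f (n+1) i) atTop (𝓝 (h i)) :=
      (htend i).comp (tendsto_add_atTop_nat 1)
    have h2 : Tendsto (fun n => ∑ j, Q i j * f n j) atTop (𝓝 (∑ j, Q i j * h j)) :=
      tendsto_finset_sum _ fun j _ => ((htend j).const_mul _)
    have h3 : Tendsto (fun n => f (n+1) i) atTop (𝓝 (∑ j, Q i j * h j)) := by
      simpa only [hfsucc] using h2
    exact tendsto_nhds_unique h3 h1
  -- the left-kernel vector
  set y : Fin J → ℝ := fun j => h j - h 0 with hydef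
  have hyQ : ∀ j, ∑ i, Q j i * y i = y j := by
    intro j
    have : ∑ i, Q j i * y i = (∑ i, Q j i * h i) - (∑ i, Q j i) * h 0 := by
      rw [Finset.sum_mul]
      rw [← Finset.sum_sub_distrib]
      apply Finset.sum_congr rfl
      intro i _
      simp [hydef]; ring
    rw [this, hQh j, hrowsum j, one_mul]
  have hy0 : y 0 = 0 := by simp [hydef]
  have hyne : y ≠ 0 := by
    intro hcontra
    have e1 : y i₁ = 0 := by rw [hcontra]; rfl
    have e2 : y i₂ = 0 := by rw [hcontra]; rfl
    have e1' : h i₁ - h 0 = 0 := e1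
    have e2' : h i₂ - h 0 = 0 := e2
    rw [hhC₁ i₁ hi₁] at e1'
    rw [hhC₂ i₂ hi₂] at e2'
    linarith
  rw [← Matrix.exists_vecMul_eq_zero_iff]
  refine ⟨y, hyne, ?_⟩
  funext j
  have : (y ᵥ* Matrix.updateRow (1 - Qᵀ) 0 (fun _ => (1:ℝ))) j
      = ∑ i, y i * (Matrix.updateRow (1 - Qᵀ) 0 (fun _ => (1:ℝ))) i j := by
    simp [Matrix.vecMul, dotProduct]
  rw [this]
  have hterm : ∀ i, y i * (Matrix.updateRow (1 - Qᵀ) 0 (fun _ => (1:ℝ))) i j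
      = y i * ((1 - Qᵀ) i j) := by
    intro i
    by_cases hi : i = 0
    · subst hi
      rw [hy0]
      ring
    · rw [Matrix.updateRow_ne hi]
  rw [Finset.sum_congr rfl (fun i _ => hterm i)]
  have hterm2 : ∀ i, y i * ((1 - Qᵀ) i j) = (if i = j then y i else 0) - Q j i * y i := by
    intro i
    rw [Matrix.sub_apply, Matrix.one_apply, Matrix.transpose_apply]
    split <;> ring
  rw [Finset.sum_congr rfl (fun i _ => hterm2 i), Finset.sum_sub_distrib, hyQ j,
    Finset.sum_ite_eq' Finset.univ j y]
  simp
end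

section
/- Let (Xₙ) be a Markov chain on Ω with stationary distribution π, and suppose there exist m ∈ ℕ, δ > 0, and a state x₀ such that ℙ_u[τ_{x₀} ≤ m] ≥ δ for all u ∈ Ω. Then the stationary probability of x₀ satisfies π({x₀}) ≥ δ/m². -/
open MeasureTheory ProbabilityTheory ENNReal

/-- `hitProb κ x₀ n u` is the probability that a Markov chain with transition kernel `κ`
started at `u` hits the state `x₀` within the first `n` steps (at some time `1 ≤ k ≤ n`). -/
noncomputable def hitProb {Ω : Type*} [MeasurableSpace Ω] [DecidableEq Ω]
    (κ : Kernel Ω Ω) (x₀ : Ω) : ℕ → Ω → ℝ≥0∞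
  | 0, _ => 0
  | n + 1, u => ∫⁻ v, (if v = x₀ then 1 else hitProb κ x₀ n v) ∂(κ u)

lemma hitProb_measurable {Ω : Type*} [MeasurableSpace Ω] [MeasurableSingletonClass Ω]
    [DecidableEq Ω] (κ : Kernel Ω Ω) [IsMarkovKernel κ] (x₀ : Ω) :
    ∀ n, Measurable (hitProb κ x₀ n) := by
  intro n
  induction n with
  | zero => simp only [hitProb]; exact measurable_const
  | succ n ih =>
    have hf : Measurable (fun v => if v = x₀ then (1 : ℝ≥0∞) else hitProb κ x₀ n v) := by
      exact Measurable.ite (by simp [Set.setOf_eq_eq_singleton]) measurable_const ih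
    exact hf.lintegral_kernel

lemma lintegral_hitProb_le {Ω : Type*} [MeasurableSpace Ω] [MeasurableSingletonClass Ω]
    [DecidableEq Ω] (κ : Kernel Ω Ω) [IsMarkovKernel κ] (π : Measure Ω)
    [IsProbabilityMeasure π] (hinv : Kernel.Invariant κ π) (x₀ : Ω) :
    ∀ n, ∫⁻ u, hitProb κ x₀ n u ∂π ≤ n * π {x₀} := by
  intro n
  induction n with
  | zero => simp [hitProb]
  | succ n ih =>
    have hf : Measurable (fun v => if v = x₀ then (1 : ℝ≥0∞) else hitProb κ x₀ n v) :=
      Measurable.ite (by simp [Set.setOf_eq_eq_singleton]) measurable_const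
        (hitProb_measurable κ x₀ n)
    have hbound : ∀ u : Ω, hitProb κ x₀ (n + 1) u ≤
        (κ u) {x₀} + ∫⁻ v, hitProb κ x₀ n v ∂(κ u) := by
      intro u
      have : hitProb κ x₀ (n + 1) u =
          ∫⁻ v, (if v = x₀ then 1 else hitProb κ x₀ n v) ∂(κ u) := rfl
      rw [this]
      calc ∫⁻ v, (if v = x₀ then 1 else hitProb κ x₀ n v) ∂(κ u)
          ≤ ∫⁻ v, (Set.indicator {x₀} (fun _ => 1) v + hitProb κ x₀ n v) ∂(κ u) := by
            refine lintegral_mono fun v => ?_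
            by_cases hv : v = x₀ <;> simp [hv]
        _ = (κ u) {x₀} + ∫⁻ v, hitProb κ x₀ n v ∂(κ u) := by
            rw [lintegral_add_left (measurable_const.indicator (measurableSet_singleton x₀))]
            congr 1
            rw [lintegral_indicator (measurableSet_singleton x₀)]
            simp
    calc ∫⁻ u, hitProb κ x₀ (n + 1) u ∂π
        ≤ ∫⁻ u, ((κ u) {x₀} + ∫⁻ v, hitProb κ x₀ n v ∂(κ u)) ∂π := lintegral_mono hbound
      _ = (∫⁻ u, (κ u) {x₀} ∂π) + ∫⁻ u, ∫⁻ v, hitProb κ x₀ n v ∂(κ u) ∂π := by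
          exact lintegral_add_left (Kernel.measurable_coe κ (measurableSet_singleton x₀)) _
      _ = π {x₀} + ∫⁻ v, hitProb κ x₀ n v ∂π := by
          congr 1
          · rw [← Measure.bind_apply (measurableSet_singleton x₀) κ.measurable.aemeasurable, hinv.def]
          · rw [← Measure.lintegral_bind κ.measurable.aemeasurable (hitProb_measurable κ x₀ n).aemeasurable, hinv.def]
      _ ≤ π {x₀} + n * π {x₀} := add_le_add_right ih _
      _ = (n + 1 : ℕ) * π {x₀} := by push_cast; ring

/-- If a Markov chain with kernel `κ` has a stationary distribution `π` and from every
state the probability of hitting `x₀` within `m` steps is at least `δ`, then the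
stationary probability of `x₀` satisfies `π({x₀}) ≥ δ/m²`. -/
theorem stmt_13 {Ω : Type*} [MeasurableSpace Ω] [MeasurableSingletonClass Ω]
    [DecidableEq Ω]
    (κ : Kernel Ω Ω) [IsMarkovKernel κ] (π : Measure Ω) [IsProbabilityMeasure π]
    (hinv : Kernel.Invariant κ π)
    (x₀ : Ω) (m : ℕ) (hm : 0 < m) (δ : ℝ≥0∞) (hδ : 0 < δ)
    (h : ∀ u : Ω, δ ≤ hitProb κ x₀ m u) :
    δ / (m : ℝ≥0∞) ^ 2 ≤ π {x₀} := by
  have key : δ ≤ m * π {x₀} := by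
    calc δ = ∫⁻ _, δ ∂π := by simp
      _ ≤ ∫⁻ u, hitProb κ x₀ m u ∂π := lintegral_mono h
      _ ≤ m * π {x₀} := lintegral_hitProb_le κ π hinv x₀ m
  have hm' : (m : ℝ≥0∞) ≠ 0 := by exact_mod_cast hm.ne'
  have hmtop : (m : ℝ≥0∞) ≠ ⊤ := natCast_ne_top m
  calc δ / (m : ℝ≥0∞) ^ 2 ≤ δ / m := by
        gcongr
        exact le_self_pow (by exact_mod_cast hm) two_ne_zero
    _ ≤ π {x₀} := by
        rw [ENNReal.div_le_iff hm' hmtop, mul_comm]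
        exact key
end
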